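/- A signed graph G_σ is balanced if and only if it can be switched to have all edges positive, i.e., there exists a vertex subset W such that negating the signs of all edges with exactly one endpoint in W makes every edge positive. -/

import Mathlib

namespace SignedGraph

variable {V : Type*}

/-- The sign of a walk in a signed graph: the product of its edge signs. -/
def walkSign {G : SimpleGraph V} (σ : V → V → ℤˣ) : {u v : V} → G.Walk u v → ℤˣ
  | _, _, SimpleGraph.Walk.nil => 1
  | u, _, SimpleGraph.Walk.cons (v := w) _ p => σ u w * walkSign σ p

/-- A signed graph is balanced if every cycle has positive sign. -/
def Balanced (G : SimpleGraph V) (σ : V → V → ℤˣ) : Prop :=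
  ∀ ⦃u : V⦄ (c : G.Walk u u), c.IsCycle → walkSign σ c = 1

/-- Sign connection: every two distinct vertices are joined both by a
positive and by a negative walk. -/
def SignConnected (G : SimpleGraph V) (σ : V → V → ℤˣ) : Prop :=
  ∀ x y : V, x = y ∨
    ((∃ p : G.Walk x y, walkSign σ p = 1) ∧ (∃ p : G.Walk x y, walkSign σ p = -1))

open Classical in
/-- Switching by a vertex subset `W`: negate the signs of edges with exactly
one endpoint in `W`. -/
noncomputable def switchSign (W : Set V) (σ : V → V → ℤˣ) (u v : V) : ℤˣ :=
  if Xor' (u ∈ W) (v ∈ W) then -σ u v else σ u v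

end SignedGraph

open SignedGraph SimpleGraph Walk

section Aux

variable {V : Type*} {G : SimpleGraph V} (σ : V → V → ℤˣ)

lemma walkSign_nil {u : V} : walkSign (G := G) σ (Walk.nil : G.Walk u u) = 1 := rfl

lemma walkSign_cons {u v w : V} (h : G.Adj u v) (p : G.Walk v w) :
    walkSign σ (Walk.cons h p) = σ u v * walkSign σ p := rfl

lemma walkSign_append {u v w : V} (p : G.Walk u v) (q : G.Walk v w) :
    walkSign σ (p.append q) = walkSign σ p * walkSign σ q := by
  induction p with
  | nil => rw [Walk.nil_append, walkSign_nil, one_mul]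
  | cons h p ih =>
    rw [Walk.cons_append, walkSign_cons, walkSign_cons, ih, mul_assoc]

lemma walkSign_reverse (hσ : ∀ u v : V, σ u v = σ v u) {u v : V} (p : G.Walk u v) :
    walkSign σ p.reverse = walkSign σ p := by
  induction p with
  | nil => rfl
  | @cons a b c h p ih =>
    rw [Walk.reverse_cons, walkSign_append, ih, walkSign_cons,
      walkSign_nil, walkSign_cons, mul_one, hσ b a, mul_comm]

lemma walkSign_copy {u v u' v' : V} (p : G.Walk u v) (hu : u = u') (hv : v = v') :
    walkSign σ (p.copy hu hv) = walkSign σ p := by subst hu; subst hv; rfl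

lemma walkSign_rotate [DecidableEq V] {u x : V} (c : G.Walk u u) (hx : x ∈ c.support) :
    walkSign σ (c.rotate x hx) = walkSign σ c := by
  unfold SimpleGraph.Walk.rotate
  rw [walkSign_append, mul_comm, ← walkSign_append, Walk.take_spec]

lemma length_rotate [DecidableEq V] {u x : V} (c : G.Walk u u) (hx : x ∈ c.support) :
    (c.rotate x hx).length = c.length := by
  rw [← Walk.length_darts, ← Walk.length_darts, (Walk.rotate_darts c x hx).perm.length_eq]

/-- A path from `v` to `u` containing the edge `s(u,v)` is a single edge. -/
lemma path_eq_single_of_end_edge :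
    ∀ {v u : V} (p : G.Walk v u), p.IsPath → s(u, v) ∈ p.edges →
      ∃ h' : G.Adj v u, p = Walk.cons h' Walk.nil := by
  intro v u p
  induction p with
  | nil => simp
  | @cons a b c h' q ih =>
    -- h' : G.Adj a b, q : G.Walk b c ; here v = a, u = c
    intro hp he
    have huv : G.Adj c a := (Walk.cons h' q).adj_of_mem_edges he
    rw [Walk.edges_cons, List.mem_cons] at he
    rcases he with he | he
    · rw [Sym2.eq_iff] at he
      rcases he with ⟨h1, h2⟩ | ⟨h1, _⟩
      · exact absurd h1 (G.ne_of_adj huv)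
      · subst h1
        have hq : q.IsPath := ((Walk.cons_isPath_iff _ _).1 hp).1
        have : q = Walk.nil := Walk.isPath_iff_eq_nil.1 hq
        subst this
        exact ⟨h', rfl⟩
    · exfalso
      have hv : a ∈ q.support := Walk.snd_mem_support_of_mem_edges q he
      exact ((Walk.cons_isPath_iff _ _).1 hp).2 hv

/-- In a balanced signed graph, every closed walk has sign `1`. -/
lemma walkSign_closed (hσ : ∀ u v : V, σ u v = σ v u) (hb : Balanced G σ) :
    ∀ (n : ℕ) {u : V} (c : G.Walk u u), c.length = n → walkSign σ c = 1 := by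
  intro n
  induction n using Nat.strong_induction_on with
  | _ n ih =>
    intro u c hlen
    classical
    by_cases hnd : c.support.tail.Nodup
    · cases c with
      | nil => rfl
      | cons h p =>
        rename_i v
        -- h : G.Adj u v, p : G.Walk v u
        rw [Walk.support_cons, List.tail_cons] at hnd
        have hpath : p.IsPath := Walk.IsPath.mk' hnd
        by_cases he : s(u, v) ∈ p.edges
        · obtain ⟨h', rfl⟩ := path_eq_single_of_end_edge p hpath he
          rw [walkSign_cons, walkSign_cons, walkSign_nil, mul_one, hσ v u,
            Int.units_mul_self]
        · exact hb _ ((Walk.cons_isCycle_iff p h).2 ⟨hpath, he⟩)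
    · obtain ⟨x, hdup⟩ := List.exists_duplicate_iff_not_nodup.2 hnd
      have hcount : 2 ≤ c.support.tail.count x := List.duplicate_iff_two_le_count.1 hdup
      have hx : x ∈ c.support := List.mem_of_mem_tail hdup.mem
      have hsign := walkSign_rotate σ c hx
      have hcount' : 2 ≤ (c.rotate x hx).support.tail.count x := by
        rwa [List.Perm.count_eq (Walk.support_rotate c x hx).perm]
      have hlen' : (c.rotate x hx).length = n := by
        rw [_root_.length_rotate]; exact hlen
      have hnn : ¬(c.rotate x hx).Nil := by
        rw [Walk.nil_iff_length_eq, hlen']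
        intro h0
        have hcnil : c = Walk.nil := Walk.nil_iff_eq_nil.1 (Walk.length_eq_zero_iff.1 (hlen.trans h0))
        rw [hcnil, Walk.support_nil, List.tail_cons] at hcount
        simp at hcount
      obtain ⟨y, h2, p2, hgen⟩ := Walk.not_nil_iff.1 hnn
      rw [hgen] at hcount' hlen' hsign
      rw [← hsign]
      rw [Walk.support_cons, List.tail_cons] at hcount'
      have hxmem : x ∈ p2.support := List.count_pos_iff.1 (by omega)
      have hspec := p2.take_spec hxmem
      have hone : (p2.takeUntil x hxmem).support.count x = 1 :=
        p2.count_support_takeUntil_eq_one hxmem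
      have hne : (p2.dropUntil x hxmem).length ≠ 0 := by
        intro h0
        have : p2.dropUntil x hxmem = Walk.nil := Walk.nil_iff_eq_nil.1 (Walk.length_eq_zero_iff.1 h0)
        rw [this, Walk.append_nil] at hspec
        rw [hspec] at hone
        omega
      have hlensplit : (p2.takeUntil x hxmem).length + (p2.dropUntil x hxmem).length
          = p2.length := by
        rw [← Walk.length_append, hspec]
      have hlp2 : p2.length + 1 = n := by
        rw [← hlen', Walk.length_cons]
      have h1 : walkSign σ (Walk.cons h2 (p2.takeUntil x hxmem)) = 1 := by
        apply ih ((Walk.cons h2 (p2.takeUntil x hxmem)).length) _ _ rfl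
        rw [Walk.length_cons]; omega
      have hd : walkSign σ (p2.dropUntil x hxmem) = 1 := by
        apply ih ((p2.dropUntil x hxmem).length) _ _ rfl
        omega
      calc walkSign σ (Walk.cons h2 p2)
          = walkSign σ (Walk.cons h2 ((p2.takeUntil x hxmem).append (p2.dropUntil x hxmem))) := by
            rw [hspec]
        _ = walkSign σ (Walk.cons h2 (p2.takeUntil x hxmem))
              * walkSign σ (p2.dropUntil x hxmem) := by
            rw [walkSign_cons, walkSign_cons, walkSign_append, mul_assoc]
        _ = 1 := by rw [h1, hd, mul_one]

/-- In a balanced signed graph, any two walks between the same vertices have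
the same sign. -/
lemma walkSign_unique (hσ : ∀ u v : V, σ u v = σ v u) (hb : Balanced G σ)
    {u v : V} (p q : G.Walk u v) : walkSign σ p = walkSign σ q := by
  have h1 : walkSign σ (p.append q.reverse) = 1 :=
    walkSign_closed σ hσ hb _ _ rfl
  rw [walkSign_append, walkSign_reverse σ hσ] at h1
  calc walkSign σ p = walkSign σ p * (walkSign σ q * walkSign σ q) := by
        rw [Int.units_mul_self, mul_one]
    _ = (walkSign σ p * walkSign σ q) * walkSign σ q := by rw [mul_assoc]
    _ = walkSign σ q := by rw [h1, one_mul]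

end Aux

/-- A signed graph is balanced iff it can be switched to be all positive. -/
theorem stmt_1 {V : Type*} [Fintype V] (G : SimpleGraph V) (σ : V → V → ℤˣ)
    (hσ : ∀ u v : V, σ u v = σ v u) :
    Balanced G σ ↔
      ∃ W : Set V, ∀ u v : V, G.Adj u v → switchSign W σ u v = 1 := by
  classical
  constructor
  · intro hb
    -- representative of each connected component
    set rep : V → V := fun v => (G.connectedComponentMk v).out with hrep
    have hreach : ∀ v : V, G.Reachable (rep v) v := by
      intro v
      have h : G.connectedComponentMk (rep v) = G.connectedComponentMk v := by
        simp only [hrep]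
        exact Quot.out_eq _
      exact ConnectedComponent.eq.mp h
    -- chosen walk from the representative
    set wlk : ∀ v : V, G.Walk (rep v) v := fun v => (hreach v).some with hwlk
    set s : V → ℤˣ := fun v => walkSign σ (wlk v) with hs
    refine ⟨{v | s v = -1}, ?_⟩
    intro u v hadj
    have hru : rep u = rep v := by
      simp only [hrep]
      rw [ConnectedComponent.connectedComponentMk_eq_of_adj hadj]
    have key : s v = s u * σ u v := by
      have : s v = walkSign σ (((wlk u).copy hru rfl).append (Walk.cons hadj Walk.nil)) :=
        walkSign_unique σ hσ hb _ _
      rw [this, walkSign_append, walkSign_copy, walkSign_cons, walkSign_nil, mul_one]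
    have key2 : σ u v = s u * s v := by
      rw [key, ← mul_assoc, Int.units_mul_self, one_mul]
    show switchSign _ σ u v = 1
    rcases Int.units_eq_one_or (s u) with h1 | h1 <;>
      rcases Int.units_eq_one_or (s v) with h2 | h2 <;>
        simp [switchSign, Xor', Set.mem_setOf_eq, h1, h2, key2]
  · rintro ⟨W, hW⟩
    intro u c _
    set s : V → ℤˣ := fun v => if v ∈ W then -1 else 1 with hs
    have hss : ∀ v, s v * s v = 1 := fun v => Int.units_mul_self _
    have hsw : ∀ a b : V, switchSign W σ a b = s a * σ a b * s b := by
      intro a b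
      by_cases ha : a ∈ W <;> by_cases hb : b ∈ W <;>
        simp [switchSign, Xor', hs, ha, hb, mul_comm, neg_mul, mul_neg]
    have hdecomp : ∀ {a b : V} (p : G.Walk a b),
        walkSign (switchSign W σ) p = s a * walkSign σ p * s b := by
      intro a b p
      induction p with
      | nil => rw [walkSign_nil, walkSign_nil, mul_one, hss]
      | @cons x y z h q ih =>
        rw [walkSign_cons, walkSign_cons, ih, hsw]
        have := hss y
        calc s x * σ x y * s y * (s y * walkSign σ q * s z)
            = s x * σ x y * (s y * s y) * walkSign σ q * s z := by
              simp only [mul_assoc]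
          _ = s x * (σ x y * walkSign σ q) * s z := by
              rw [hss, mul_one]
              simp only [mul_assoc]
    have hall : ∀ {a b : V} (p : G.Walk a b), walkSign (switchSign W σ) p = 1 := by
      intro a b p
      induction p with
      | nil => rfl
      | cons h q ih =>
        rw [walkSign_cons, ih, mul_one]
        exact hW _ _ h
    have h1 : s u * walkSign σ c * s u = 1 := by rw [← hdecomp]; exact hall c
    calc walkSign σ c
        = (s u * s u) * walkSign σ c * (s u * s u) := by rw [hss, one_mul, mul_one]
      _ = s u * (s u * walkSign σ c * s u) * s u := by simp only [mul_assoc]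
      _ = s u * s u := by rw [h1, mul_one]
      _ = 1 := hss u
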